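/- Let Γ ≤ D_{n₁} × D_{n₂} × D_{n₃} be a 2-injective 3-factor subdirect product with nᵢ ∉ {1,2} for all i ∈ {1,2,3}. If for every i ∈ {1,2,3} the kernel Hᵢ contains no element whose two components other than the i-th are both reflections, then Γ is a rotate-or-reflect group. -/

import Mathlib

/-- `Γ ≤ G₁ × G₂ × G₃` is a (3-factor) subdirect product:
the projection to each factor is surjective on `Γ`. -/
def IsSubdirect3 {G₁ G₂ G₃ : Type*} [Group G₁] [Group G₂] [Group G₃]
    (Γ : Subgroup (G₁ × G₂ × G₃)) : Prop :=
  (∀ x : G₁, ∃ g ∈ Γ, g.1 = x) ∧ (∀ x : G₂, ∃ g ∈ Γ, g.2.1 = x) ∧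
    (∀ x : G₃, ∃ g ∈ Γ, g.2.2 = x)

/-- `Γ ≤ G₁ × G₂ × G₃` is 2-injective: for each `i`, the projection of `Γ` onto
the product of the two factors other than `Gᵢ` is injective on `Γ`. -/
def IsTwoInjective3 {G₁ G₂ G₃ : Type*} [Group G₁] [Group G₂] [Group G₃]
    (Γ : Subgroup (G₁ × G₂ × G₃)) : Prop :=
  (∀ g ∈ Γ, ∀ h ∈ Γ, g.2.1 = h.2.1 → g.2.2 = h.2.2 → g = h) ∧
  (∀ g ∈ Γ, ∀ h ∈ Γ, g.1 = h.1 → g.2.2 = h.2.2 → g = h) ∧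
  (∀ g ∈ Γ, ∀ h ∈ Γ, g.1 = h.1 → g.2.1 = h.2.1 → g = h)

open DihedralGroup in
/-- An element of `Dₙ` is a rotation if it lies in the cyclic subgroup of
rotations `{r i}`; the identity counts as a rotation. -/
def IsRotation {n : ℕ} (x : DihedralGroup n) : Prop := ∃ i, x = r i

open DihedralGroup in
/-- An element of `Dₙ` is a reflection if it is of the form `sr i`. -/
def IsReflection {n : ℕ} (x : DihedralGroup n) : Prop := ∃ i, x = sr i

/-- A subgroup of a product of three dihedral groups is a rotate-or-reflect group if every
element is either a rotation in all components or a reflection in all components. -/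
def IsRotateOrReflect3 {n₁ n₂ n₃ : ℕ}
    (Γ : Subgroup (DihedralGroup n₁ × DihedralGroup n₂ × DihedralGroup n₃)) : Prop :=
  ∀ g ∈ Γ, (IsRotation g.1 ∧ IsRotation g.2.1 ∧ IsRotation g.2.2) ∨
    (IsReflection g.1 ∧ IsReflection g.2.1 ∧ IsReflection g.2.2)

/-- A subgroup of a product of two dihedral groups is a rotate-or-reflect group if every
element is either a rotation in both components or a reflection in both components. -/
def IsRotateOrReflect2 {n₁ n₂ : ℕ}
    (Γ : Subgroup (DihedralGroup n₁ × DihedralGroup n₂)) : Prop :=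
  ∀ g ∈ Γ, (IsRotation g.1 ∧ IsRotation g.2) ∨ (IsReflection g.1 ∧ IsReflection g.2)

namespace StatementAux

open DihedralGroup

lemma inv_r {n : ℕ} (i : ZMod n) : (r i)⁻¹ = r (-i) := rfl
lemma inv_sr {n : ℕ} (i : ZMod n) : (sr i)⁻¹ = sr i := rfl

lemma two_ne {n : ℕ} (hn : 3 ≤ n) : (2 : ZMod n) ≠ 0 := by
  intro h
  have h2 : ((2 : ℕ) : ZMod n) = 0 := by exact_mod_cast h
  rw [ZMod.natCast_eq_zero_iff] at h2
  have := Nat.le_of_dvd (by norm_num) h2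
  omega

/-- a central rotation commutes with everything (commutator form). -/
lemma central_comm {n : ℕ} {v : ZMod n} (hv : v + v = 0) (y : DihedralGroup n) :
    r v * y * (r v)⁻¹ * y⁻¹ = 1 := by
  cases y with
  | r w =>
      rw [inv_r, inv_r, r_mul_r, r_mul_r, r_mul_r, one_def]
      congr 1; ring
  | sr w =>
      rw [inv_r, inv_sr, r_mul_sr, sr_mul_r, sr_mul_sr, one_def]
      congr 1; linear_combination hv

/-- a reflection commuting with `r 1` forces `2 = 0`. -/
lemma sr_comm_r_one {n : ℕ} (hn : 3 ≤ n) {u : ZMod n}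
    (h : sr u * r 1 * (sr u)⁻¹ * (r 1)⁻¹ = 1) : False := by
  rw [inv_sr, inv_r, sr_mul_r, sr_mul_sr, r_mul_r, one_def] at h
  have h' : u - (u + 1) + -1 = 0 := by
    injection h
  exact two_ne hn (by linear_combination -h')

variable {n₁ n₂ n₃ : ℕ}
  {Γ : Subgroup (DihedralGroup n₁ × DihedralGroup n₂ × DihedralGroup n₃)}

section Hrot

variable (h₁ : 3 ≤ n₁) (h₂ : 3 ≤ n₂) (h₃ : 3 ≤ n₃)
  (hsd : IsSubdirect3 Γ) (h2inj : IsTwoInjective3 Γ)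

include h₁ h₂ h₃ hsd h2inj

/-- Any element of `Γ` whose third component is trivial has rotations in the
other two components. -/
lemma H3_rot
    (hk₃ : ∀ g ∈ Γ, g.2.2 = 1 → ¬(IsReflection g.1 ∧ IsReflection g.2.1)) :
    ∀ γ ∈ Γ, γ.2.2 = 1 → (∃ u, γ.1 = r u) ∧ (∃ v, γ.2.1 = r v) := by
  obtain ⟨hs₁, hs₂, hs₃⟩ := hsd
  obtain ⟨hi₁, hi₂, hi₃⟩ := h2inj
  intro γ hγ h3
  cases hc1 : γ.1 with
  | r u =>
    cases hc2 : γ.2.1 with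
    | r v => exact ⟨⟨u, rfl⟩, ⟨v, rfl⟩⟩
    | sr v =>
      exfalso
      have hsqm : γ * γ ∈ Γ := Γ.mul_mem hγ hγ
      have hsq : γ * γ = 1 := by
        apply hi₁ _ hsqm _ Γ.one_mem
        · simp [Prod.snd_mul, Prod.fst_mul, hc2, one_def, -r_zero]
        · simp [Prod.snd_mul, h3, one_def, -r_zero]
      have hu : u + u = 0 := by
        have := congrArg (fun z => z.1) hsq
        simpa [Prod.fst_mul, hc1, one_def, -r_zero] using this
      obtain ⟨q, hq, hq2⟩ := hs₂ (r 1)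
      have hcm : γ * q * γ⁻¹ * q⁻¹ ∈ Γ :=
        Γ.mul_mem (Γ.mul_mem (Γ.mul_mem hγ hq) (Γ.inv_mem hγ)) (Γ.inv_mem hq)
      have hcom : γ * q * γ⁻¹ * q⁻¹ = 1 := by
        apply hi₂ _ hcm _ Γ.one_mem
        · simp only [Prod.fst_mul, Prod.fst_inv, Prod.fst_one, hc1]
          exact central_comm hu q.1
        · simp only [Prod.snd_mul, Prod.snd_inv, Prod.snd_one, h3]
          group
      have e : γ.2.1 * q.2.1 * γ.2.1⁻¹ * q.2.1⁻¹ = 1 := by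
        have := congrArg (fun z => z.2.1) hcom
        simpa [Prod.snd_mul, Prod.fst_mul, Prod.snd_inv, Prod.fst_inv] using this
      rw [hc2, hq2] at e
      exact sr_comm_r_one h₂ e
  | sr u =>
    cases hc2 : γ.2.1 with
    | sr v =>
      exact absurd ⟨⟨u, hc1⟩, ⟨v, hc2⟩⟩ (hk₃ γ hγ h3)
    | r v =>
      exfalso
      have hsqm : γ * γ ∈ Γ := Γ.mul_mem hγ hγ
      have hsq : γ * γ = 1 := by
        apply hi₂ _ hsqm _ Γ.one_mem
        · simp [Prod.fst_mul, hc1, one_def, -r_zero]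
        · simp [Prod.snd_mul, h3, one_def, -r_zero]
      have hv : v + v = 0 := by
        have := congrArg (fun z => z.2.1) hsq
        simpa [Prod.snd_mul, Prod.fst_mul, hc2, one_def, -r_zero] using this
      obtain ⟨q, hq, hq1⟩ := hs₁ (r 1)
      have hcm : γ * q * γ⁻¹ * q⁻¹ ∈ Γ :=
        Γ.mul_mem (Γ.mul_mem (Γ.mul_mem hγ hq) (Γ.inv_mem hγ)) (Γ.inv_mem hq)
      have hcom : γ * q * γ⁻¹ * q⁻¹ = 1 := by
        apply hi₁ _ hcm _ Γ.one_mem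
        · simp only [Prod.snd_mul, Prod.fst_mul, Prod.snd_inv, Prod.fst_inv,
            Prod.snd_one, Prod.fst_one, hc2]
          exact central_comm hv q.2.1
        · simp only [Prod.snd_mul, Prod.snd_inv, Prod.snd_one, h3]
          group
      have e : γ.1 * q.1 * γ.1⁻¹ * q.1⁻¹ = 1 := by
        have := congrArg (fun z => z.1) hcom
        simpa [Prod.fst_mul, Prod.fst_inv] using this
      rw [hc1, hq1] at e
      exact sr_comm_r_one h₁ e

/-- Any element of `Γ` whose first component is trivial has rotations in the
other two components. -/
lemma H1_rot
    (hk₁ : ∀ g ∈ Γ, g.1 = 1 → ¬(IsReflection g.2.1 ∧ IsReflection g.2.2)) :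
    ∀ γ ∈ Γ, γ.1 = 1 → (∃ v, γ.2.1 = r v) ∧ (∃ w, γ.2.2 = r w) := by
  obtain ⟨hs₁, hs₂, hs₃⟩ := hsd
  obtain ⟨hi₁, hi₂, hi₃⟩ := h2inj
  intro γ hγ h1
  cases hc2 : γ.2.1 with
  | r v =>
    cases hc3 : γ.2.2 with
    | r w => exact ⟨⟨v, rfl⟩, ⟨w, rfl⟩⟩
    | sr w =>
      exfalso
      have hsqm : γ * γ ∈ Γ := Γ.mul_mem hγ hγ
      have hsq : γ * γ = 1 := by
        apply hi₂ _ hsqm _ Γ.one_mem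
        · simp [Prod.fst_mul, h1, one_def, -r_zero]
        · simp [Prod.snd_mul, hc3, one_def, -r_zero]
      have hv : v + v = 0 := by
        have := congrArg (fun z => z.2.1) hsq
        simpa [Prod.snd_mul, Prod.fst_mul, hc2, one_def, -r_zero] using this
      obtain ⟨q, hq, hq3⟩ := hs₃ (r 1)
      have hcm : γ * q * γ⁻¹ * q⁻¹ ∈ Γ :=
        Γ.mul_mem (Γ.mul_mem (Γ.mul_mem hγ hq) (Γ.inv_mem hγ)) (Γ.inv_mem hq)
      have hcom : γ * q * γ⁻¹ * q⁻¹ = 1 := by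
        apply hi₃ _ hcm _ Γ.one_mem
        · simp only [Prod.fst_mul, Prod.fst_inv, Prod.fst_one, h1]
          group
        · simp only [Prod.snd_mul, Prod.fst_mul, Prod.snd_inv, Prod.fst_inv,
            Prod.snd_one, Prod.fst_one, hc2]
          exact central_comm hv q.2.1
      have e : γ.2.2 * q.2.2 * γ.2.2⁻¹ * q.2.2⁻¹ = 1 := by
        have := congrArg (fun z => z.2.2) hcom
        simpa [Prod.snd_mul, Prod.snd_inv] using this
      rw [hc3, hq3] at e
      exact sr_comm_r_one h₃ e
  | sr v =>
    cases hc3 : γ.2.2 with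
    | sr w =>
      exact absurd ⟨⟨v, hc2⟩, ⟨w, hc3⟩⟩ (hk₁ γ hγ h1)
    | r w =>
      exfalso
      have hsqm : γ * γ ∈ Γ := Γ.mul_mem hγ hγ
      have hsq : γ * γ = 1 := by
        apply hi₃ _ hsqm _ Γ.one_mem
        · simp [Prod.fst_mul, h1, one_def, -r_zero]
        · simp [Prod.snd_mul, Prod.fst_mul, hc2, one_def, -r_zero]
      have hw : w + w = 0 := by
        have := congrArg (fun z => z.2.2) hsq
        simpa [Prod.snd_mul, hc3, one_def, -r_zero] using this
      obtain ⟨q, hq, hq2⟩ := hs₂ (r 1)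
      have hcm : γ * q * γ⁻¹ * q⁻¹ ∈ Γ :=
        Γ.mul_mem (Γ.mul_mem (Γ.mul_mem hγ hq) (Γ.inv_mem hγ)) (Γ.inv_mem hq)
      have hcom : γ * q * γ⁻¹ * q⁻¹ = 1 := by
        apply hi₂ _ hcm _ Γ.one_mem
        · simp only [Prod.fst_mul, Prod.fst_inv, Prod.fst_one, h1]
          group
        · simp only [Prod.snd_mul, Prod.snd_inv, Prod.snd_one, hc3]
          exact central_comm hw q.2.2
      have e : γ.2.1 * q.2.1 * γ.2.1⁻¹ * q.2.1⁻¹ = 1 := by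
        have := congrArg (fun z => z.2.1) hcom
        simpa [Prod.snd_mul, Prod.fst_mul, Prod.snd_inv, Prod.fst_inv] using this
      rw [hc2, hq2] at e
      exact sr_comm_r_one h₂ e

/-- Any element of `Γ` whose second component is trivial has rotations in the
other two components. -/
lemma H2_rot
    (hk₂ : ∀ g ∈ Γ, g.2.1 = 1 → ¬(IsReflection g.1 ∧ IsReflection g.2.2)) :
    ∀ γ ∈ Γ, γ.2.1 = 1 → (∃ u, γ.1 = r u) ∧ (∃ w, γ.2.2 = r w) := by
  obtain ⟨hs₁, hs₂, hs₃⟩ := hsd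
  obtain ⟨hi₁, hi₂, hi₃⟩ := h2inj
  intro γ hγ h2
  cases hc1 : γ.1 with
  | r u =>
    cases hc3 : γ.2.2 with
    | r w => exact ⟨⟨u, rfl⟩, ⟨w, rfl⟩⟩
    | sr w =>
      exfalso
      have hsqm : γ * γ ∈ Γ := Γ.mul_mem hγ hγ
      have hsq : γ * γ = 1 := by
        apply hi₁ _ hsqm _ Γ.one_mem
        · simp [Prod.snd_mul, Prod.fst_mul, h2, one_def, -r_zero]
        · simp [Prod.snd_mul, hc3, one_def, -r_zero]
      have hu : u + u = 0 := by
        have := congrArg (fun z => z.1) hsq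
        simpa [Prod.fst_mul, hc1, one_def, -r_zero] using this
      obtain ⟨q, hq, hq3⟩ := hs₃ (r 1)
      have hcm : γ * q * γ⁻¹ * q⁻¹ ∈ Γ :=
        Γ.mul_mem (Γ.mul_mem (Γ.mul_mem hγ hq) (Γ.inv_mem hγ)) (Γ.inv_mem hq)
      have hcom : γ * q * γ⁻¹ * q⁻¹ = 1 := by
        apply hi₃ _ hcm _ Γ.one_mem
        · simp only [Prod.fst_mul, Prod.fst_inv, Prod.fst_one, hc1]
          exact central_comm hu q.1
        · simp only [Prod.snd_mul, Prod.fst_mul, Prod.snd_inv, Prod.fst_inv,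
            Prod.snd_one, Prod.fst_one, h2]
          group
      have e : γ.2.2 * q.2.2 * γ.2.2⁻¹ * q.2.2⁻¹ = 1 := by
        have := congrArg (fun z => z.2.2) hcom
        simpa [Prod.snd_mul, Prod.snd_inv] using this
      rw [hc3, hq3] at e
      exact sr_comm_r_one h₃ e
  | sr u =>
    cases hc3 : γ.2.2 with
    | sr w =>
      exact absurd ⟨⟨u, hc1⟩, ⟨w, hc3⟩⟩ (hk₂ γ hγ h2)
    | r w =>
      exfalso
      have hsqm : γ * γ ∈ Γ := Γ.mul_mem hγ hγ
      have hsq : γ * γ = 1 := by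
        apply hi₃ _ hsqm _ Γ.one_mem
        · simp [Prod.fst_mul, hc1, one_def, -r_zero]
        · simp [Prod.snd_mul, Prod.fst_mul, h2, one_def, -r_zero]
      have hw : w + w = 0 := by
        have := congrArg (fun z => z.2.2) hsq
        simpa [Prod.snd_mul, hc3, one_def, -r_zero] using this
      obtain ⟨q, hq, hq1⟩ := hs₁ (r 1)
      have hcm : γ * q * γ⁻¹ * q⁻¹ ∈ Γ :=
        Γ.mul_mem (Γ.mul_mem (Γ.mul_mem hγ hq) (Γ.inv_mem hγ)) (Γ.inv_mem hq)
      have hcom : γ * q * γ⁻¹ * q⁻¹ = 1 := by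
        apply hi₁ _ hcm _ Γ.one_mem
        · simp only [Prod.snd_mul, Prod.fst_mul, Prod.snd_inv, Prod.fst_inv,
            Prod.snd_one, Prod.fst_one, h2]
          group
        · simp only [Prod.snd_mul, Prod.snd_inv, Prod.snd_one, hc3]
          exact central_comm hw q.2.2
      have e : γ.1 * q.1 * γ.1⁻¹ * q.1⁻¹ = 1 := by
        have := congrArg (fun z => z.1) hcom
        simpa [Prod.fst_mul, Prod.fst_inv] using this
      rw [hc1, hq1] at e
      exact sr_comm_r_one h₁ e


/-- Propagation along powers of `r 1` in the third coordinate, first coordinate stays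
a rotation. -/
lemma ind3_fst
    (hk₃ : ∀ g ∈ Γ, g.2.2 = 1 → ¬(IsReflection g.1 ∧ IsReflection g.2.1))
    {h : DihedralGroup n₁ × DihedralGroup n₂ × DihedralGroup n₃} (hh : h ∈ Γ)
    {x : ZMod n₁} (hhx : h.1 = r x) (hh3 : h.2.2 = r 1) :
    ∀ k : ℕ, ∀ γ ∈ Γ, γ.2.2 = r ((k : ℕ) : ZMod n₃) → ∃ u, γ.1 = r u := by
  intro k
  induction k with
  | zero =>
    intro γ hγ h3
    have h3' : γ.2.2 = 1 := by rw [h3, one_def]; norm_num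
    exact (H3_rot h₁ h₂ h₃ hsd h2inj hk₃ γ hγ h3').1
  | succ k ih =>
    intro γ hγ h3
    have hmem : γ * h⁻¹ ∈ Γ := Γ.mul_mem hγ (Γ.inv_mem hh)
    have h22 : (γ * h⁻¹).2.2 = r ((k : ℕ) : ZMod n₃) := by
      simp only [Prod.snd_mul, Prod.snd_inv, h3, hh3, inv_r, r_mul_r]
      congr 1
      push_cast
      ring
    obtain ⟨u, hu⟩ := ih _ hmem h22
    have he : γ.1 * (r x)⁻¹ = r u := by
      simpa [Prod.fst_mul, Prod.fst_inv, hhx] using hu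
    refine ⟨u + x, ?_⟩
    have : γ.1 = r u * r x := by rw [← he]; group
    simpa using this

/-- Propagation along powers of `r 1` in the third coordinate, second coordinate stays
a rotation. -/
lemma ind3_snd
    (hk₃ : ∀ g ∈ Γ, g.2.2 = 1 → ¬(IsReflection g.1 ∧ IsReflection g.2.1))
    {h : DihedralGroup n₁ × DihedralGroup n₂ × DihedralGroup n₃} (hh : h ∈ Γ)
    {y : ZMod n₂} (hhy : h.2.1 = r y) (hh3 : h.2.2 = r 1) :
    ∀ k : ℕ, ∀ γ ∈ Γ, γ.2.2 = r ((k : ℕ) : ZMod n₃) → ∃ v, γ.2.1 = r v := by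
  intro k
  induction k with
  | zero =>
    intro γ hγ h3
    have h3' : γ.2.2 = 1 := by rw [h3, one_def]; norm_num
    exact (H3_rot h₁ h₂ h₃ hsd h2inj hk₃ γ hγ h3').2
  | succ k ih =>
    intro γ hγ h3
    have hmem : γ * h⁻¹ ∈ Γ := Γ.mul_mem hγ (Γ.inv_mem hh)
    have h22 : (γ * h⁻¹).2.2 = r ((k : ℕ) : ZMod n₃) := by
      simp only [Prod.snd_mul, Prod.snd_inv, h3, hh3, inv_r, r_mul_r]
      congr 1
      push_cast
      ring
    obtain ⟨v, hv⟩ := ih _ hmem h22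
    have he : γ.2.1 * (r y)⁻¹ = r v := by
      simpa [Prod.snd_mul, Prod.fst_mul, Prod.snd_inv, Prod.fst_inv, hhy] using hv
    refine ⟨v + y, ?_⟩
    have : γ.2.1 = r v * r y := by rw [← he]; group
    simpa using this

/-- Propagation along powers of `r 1` in the second coordinate, first coordinate stays
a rotation. -/
lemma ind2_fst
    (hk₂ : ∀ g ∈ Γ, g.2.1 = 1 → ¬(IsReflection g.1 ∧ IsReflection g.2.2))
    {h : DihedralGroup n₁ × DihedralGroup n₂ × DihedralGroup n₃} (hh : h ∈ Γ)
    {x : ZMod n₁} (hhx : h.1 = r x) (hh2 : h.2.1 = r 1) :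
    ∀ k : ℕ, ∀ γ ∈ Γ, γ.2.1 = r ((k : ℕ) : ZMod n₂) → ∃ u, γ.1 = r u := by
  intro k
  induction k with
  | zero =>
    intro γ hγ h2'
    have h2'' : γ.2.1 = 1 := by rw [h2', one_def]; norm_num
    exact (H2_rot h₁ h₂ h₃ hsd h2inj hk₂ γ hγ h2'').1
  | succ k ih =>
    intro γ hγ h2'
    have hmem : γ * h⁻¹ ∈ Γ := Γ.mul_mem hγ (Γ.inv_mem hh)
    have h21 : (γ * h⁻¹).2.1 = r ((k : ℕ) : ZMod n₂) := by
      simp only [Prod.snd_mul, Prod.fst_mul, Prod.snd_inv, Prod.fst_inv, h2', hh2, inv_r,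
        r_mul_r]
      congr 1
      push_cast
      ring
    obtain ⟨u, hu⟩ := ih _ hmem h21
    have he : γ.1 * (r x)⁻¹ = r u := by
      simpa [Prod.fst_mul, Prod.fst_inv, hhx] using hu
    refine ⟨u + x, ?_⟩
    have : γ.1 = r u * r x := by rw [← he]; group
    simpa using this

/-- Propagation along powers of `r 1` in the second coordinate, third coordinate stays
a rotation. -/
lemma ind2_trd
    (hk₂ : ∀ g ∈ Γ, g.2.1 = 1 → ¬(IsReflection g.1 ∧ IsReflection g.2.2))
    {h : DihedralGroup n₁ × DihedralGroup n₂ × DihedralGroup n₃} (hh : h ∈ Γ)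
    {z : ZMod n₃} (hhz : h.2.2 = r z) (hh2 : h.2.1 = r 1) :
    ∀ k : ℕ, ∀ γ ∈ Γ, γ.2.1 = r ((k : ℕ) : ZMod n₂) → ∃ w, γ.2.2 = r w := by
  intro k
  induction k with
  | zero =>
    intro γ hγ h2'
    have h2'' : γ.2.1 = 1 := by rw [h2', one_def]; norm_num
    exact (H2_rot h₁ h₂ h₃ hsd h2inj hk₂ γ hγ h2'').2
  | succ k ih =>
    intro γ hγ h2'
    have hmem : γ * h⁻¹ ∈ Γ := Γ.mul_mem hγ (Γ.inv_mem hh)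
    have h21 : (γ * h⁻¹).2.1 = r ((k : ℕ) : ZMod n₂) := by
      simp only [Prod.snd_mul, Prod.fst_mul, Prod.snd_inv, Prod.fst_inv, h2', hh2, inv_r,
        r_mul_r]
      congr 1
      push_cast
      ring
    obtain ⟨w, hw⟩ := ih _ hmem h21
    have he : γ.2.2 * (r z)⁻¹ = r w := by
      simpa [Prod.snd_mul, Prod.snd_inv, hhz] using hw
    refine ⟨w + z, ?_⟩
    have : γ.2.2 = r w * r z := by rw [← he]; group
    simpa using this

/-- Propagation along powers of `r 1` in the first coordinate, second coordinate stays
a rotation. -/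
lemma ind1_snd
    (hk₁ : ∀ g ∈ Γ, g.1 = 1 → ¬(IsReflection g.2.1 ∧ IsReflection g.2.2))
    {h : DihedralGroup n₁ × DihedralGroup n₂ × DihedralGroup n₃} (hh : h ∈ Γ)
    {y : ZMod n₂} (hhy : h.2.1 = r y) (hh1 : h.1 = r 1) :
    ∀ k : ℕ, ∀ γ ∈ Γ, γ.1 = r ((k : ℕ) : ZMod n₁) → ∃ v, γ.2.1 = r v := by
  intro k
  induction k with
  | zero =>
    intro γ hγ h1'
    have h1'' : γ.1 = 1 := by rw [h1', one_def]; norm_num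
    exact (H1_rot h₁ h₂ h₃ hsd h2inj hk₁ γ hγ h1'').1
  | succ k ih =>
    intro γ hγ h1'
    have hmem : γ * h⁻¹ ∈ Γ := Γ.mul_mem hγ (Γ.inv_mem hh)
    have h11 : (γ * h⁻¹).1 = r ((k : ℕ) : ZMod n₁) := by
      simp only [Prod.fst_mul, Prod.fst_inv, h1', hh1, inv_r, r_mul_r]
      congr 1
      push_cast
      ring
    obtain ⟨v, hv⟩ := ih _ hmem h11
    have he : γ.2.1 * (r y)⁻¹ = r v := by
      simpa [Prod.snd_mul, Prod.fst_mul, Prod.snd_inv, Prod.fst_inv, hhy] using hv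
    refine ⟨v + y, ?_⟩
    have : γ.2.1 = r v * r y := by rw [← he]; group
    simpa using this

/-- Propagation along powers of `r 1` in the first coordinate, third coordinate stays
a rotation. -/
lemma ind1_trd
    (hk₁ : ∀ g ∈ Γ, g.1 = 1 → ¬(IsReflection g.2.1 ∧ IsReflection g.2.2))
    {h : DihedralGroup n₁ × DihedralGroup n₂ × DihedralGroup n₃} (hh : h ∈ Γ)
    {z : ZMod n₃} (hhz : h.2.2 = r z) (hh1 : h.1 = r 1) :
    ∀ k : ℕ, ∀ γ ∈ Γ, γ.1 = r ((k : ℕ) : ZMod n₁) → ∃ w, γ.2.2 = r w := by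
  intro k
  induction k with
  | zero =>
    intro γ hγ h1'
    have h1'' : γ.1 = 1 := by rw [h1', one_def]; norm_num
    exact (H1_rot h₁ h₂ h₃ hsd h2inj hk₁ γ hγ h1'').2
  | succ k ih =>
    intro γ hγ h1'
    have hmem : γ * h⁻¹ ∈ Γ := Γ.mul_mem hγ (Γ.inv_mem hh)
    have h11 : (γ * h⁻¹).1 = r ((k : ℕ) : ZMod n₁) := by
      simp only [Prod.fst_mul, Prod.fst_inv, h1', hh1, inv_r, r_mul_r]
      congr 1
      push_cast
      ring
    obtain ⟨w, hw⟩ := ih _ hmem h11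
    have he : γ.2.2 * (r z)⁻¹ = r w := by
      simpa [Prod.snd_mul, Prod.snd_inv, hhz] using hw
    refine ⟨w + z, ?_⟩
    have : γ.2.2 = r w * r z := by rw [← he]; group
    simpa using this

/-- No element of `Γ` is (reflection, reflection, rotation). -/
lemma kill110
    (hk₁ : ∀ g ∈ Γ, g.1 = 1 → ¬(IsReflection g.2.1 ∧ IsReflection g.2.2))
    (hk₂ : ∀ g ∈ Γ, g.2.1 = 1 → ¬(IsReflection g.1 ∧ IsReflection g.2.2))
    (hk₃ : ∀ g ∈ Γ, g.2.2 = 1 → ¬(IsReflection g.1 ∧ IsReflection g.2.1)) :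
    ∀ g ∈ Γ, IsReflection g.1 → IsReflection g.2.1 → IsRotation g.2.2 → False := by
  intro g hg ⟨a, hg1⟩ ⟨b, hg2⟩ ⟨c, hg3⟩
  haveI : NeZero n₃ := ⟨by omega⟩
  obtain ⟨h, hh, hh3⟩ := hsd.2.2 (r 1)
  cases hx : h.1 with
  | r x =>
    obtain ⟨u, hu⟩ := ind3_fst h₁ h₂ h₃ hsd h2inj hk₃ hh hx hh3 c.val g hg
      (by rw [hg3, ZMod.natCast_zmod_val])
    rw [hg1] at hu
    simp at hu
  | sr x =>
    cases hy : h.2.1 with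
    | r y =>
      obtain ⟨v, hv⟩ := ind3_snd h₁ h₂ h₃ hsd h2inj hk₃ hh hy hh3 c.val g hg
        (by rw [hg3, ZMod.natCast_zmod_val])
      rw [hg2] at hv
      simp at hv
    | sr y =>
      have hsqm : h * h ∈ Γ := Γ.mul_mem hh hh
      have hsq : h * h = 1 := by
        apply h2inj.2.2 _ hsqm _ Γ.one_mem
        · simp [Prod.fst_mul, hx, one_def, -r_zero]
        · simp [Prod.snd_mul, Prod.fst_mul, hy, one_def, -r_zero]
      have h2z : (1 : ZMod n₃) + 1 = 0 := by
        have := congrArg (fun z => z.2.2) hsq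
        simpa [Prod.snd_mul, hh3, one_def, -r_zero] using this
      exact two_ne h₃ (by linear_combination h2z)

/-- No element of `Γ` is (reflection, rotation, reflection). -/
lemma kill101
    (hk₁ : ∀ g ∈ Γ, g.1 = 1 → ¬(IsReflection g.2.1 ∧ IsReflection g.2.2))
    (hk₂ : ∀ g ∈ Γ, g.2.1 = 1 → ¬(IsReflection g.1 ∧ IsReflection g.2.2))
    (hk₃ : ∀ g ∈ Γ, g.2.2 = 1 → ¬(IsReflection g.1 ∧ IsReflection g.2.1)) :
    ∀ g ∈ Γ, IsReflection g.1 → IsRotation g.2.1 → IsReflection g.2.2 → False := by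
  intro g hg ⟨a, hg1⟩ ⟨c, hg2⟩ ⟨b, hg3⟩
  haveI : NeZero n₂ := ⟨by omega⟩
  obtain ⟨h, hh, hh2⟩ := hsd.2.1 (r 1)
  cases hx : h.1 with
  | r x =>
    obtain ⟨u, hu⟩ := ind2_fst h₁ h₂ h₃ hsd h2inj hk₂ hh hx hh2 c.val g hg
      (by rw [hg2, ZMod.natCast_zmod_val])
    rw [hg1] at hu
    simp at hu
  | sr x =>
    cases hz : h.2.2 with
    | r z =>
      obtain ⟨w, hw⟩ := ind2_trd h₁ h₂ h₃ hsd h2inj hk₂ hh hz hh2 c.val g hg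
        (by rw [hg2, ZMod.natCast_zmod_val])
      rw [hg3] at hw
      simp at hw
    | sr z =>
      have hsqm : h * h ∈ Γ := Γ.mul_mem hh hh
      have hsq : h * h = 1 := by
        apply h2inj.2.1 _ hsqm _ Γ.one_mem
        · simp [Prod.fst_mul, hx, one_def, -r_zero]
        · simp [Prod.snd_mul, hz, one_def, -r_zero]
      have h2z : (1 : ZMod n₂) + 1 = 0 := by
        have := congrArg (fun w => w.2.1) hsq
        simpa [Prod.snd_mul, Prod.fst_mul, hh2, one_def, -r_zero] using this
      exact two_ne h₂ (by linear_combination h2z)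

/-- No element of `Γ` is (rotation, reflection, reflection). -/
lemma kill011
    (hk₁ : ∀ g ∈ Γ, g.1 = 1 → ¬(IsReflection g.2.1 ∧ IsReflection g.2.2))
    (hk₂ : ∀ g ∈ Γ, g.2.1 = 1 → ¬(IsReflection g.1 ∧ IsReflection g.2.2))
    (hk₃ : ∀ g ∈ Γ, g.2.2 = 1 → ¬(IsReflection g.1 ∧ IsReflection g.2.1)) :
    ∀ g ∈ Γ, IsRotation g.1 → IsReflection g.2.1 → IsReflection g.2.2 → False := by
  intro g hg ⟨c, hg1⟩ ⟨a, hg2⟩ ⟨b, hg3⟩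
  haveI : NeZero n₁ := ⟨by omega⟩
  obtain ⟨h, hh, hh1⟩ := hsd.1 (r 1)
  cases hy : h.2.1 with
  | r y =>
    obtain ⟨v, hv⟩ := ind1_snd h₁ h₂ h₃ hsd h2inj hk₁ hh hy hh1 c.val g hg
      (by rw [hg1, ZMod.natCast_zmod_val])
    rw [hg2] at hv
    simp at hv
  | sr y =>
    cases hz : h.2.2 with
    | r z =>
      obtain ⟨w, hw⟩ := ind1_trd h₁ h₂ h₃ hsd h2inj hk₁ hh hz hh1 c.val g hg
        (by rw [hg1, ZMod.natCast_zmod_val])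
      rw [hg3] at hw
      simp at hw
    | sr z =>
      have hsqm : h * h ∈ Γ := Γ.mul_mem hh hh
      have hsq : h * h = 1 := by
        apply h2inj.1 _ hsqm _ Γ.one_mem
        · simp [Prod.snd_mul, Prod.fst_mul, hy, one_def, -r_zero]
        · simp [Prod.snd_mul, hz, one_def, -r_zero]
      have h2z : (1 : ZMod n₁) + 1 = 0 := by
        have := congrArg (fun w => w.1) hsq
        simpa [Prod.fst_mul, hh1, one_def, -r_zero] using this
      exact two_ne h₁ (by linear_combination h2z)

end Hrot


end StatementAux

theorem statement_3 {n₁ n₂ n₃ : ℕ} (h₁ : 3 ≤ n₁) (h₂ : 3 ≤ n₂) (h₃ : 3 ≤ n₃)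
    (Γ : Subgroup (DihedralGroup n₁ × DihedralGroup n₂ × DihedralGroup n₃))
    (hsd : IsSubdirect3 Γ) (h2inj : IsTwoInjective3 Γ)
    (hk₁ : ∀ g ∈ Γ, g.1 = 1 → ¬(IsReflection g.2.1 ∧ IsReflection g.2.2))
    (hk₂ : ∀ g ∈ Γ, g.2.1 = 1 → ¬(IsReflection g.1 ∧ IsReflection g.2.2))
    (hk₃ : ∀ g ∈ Γ, g.2.2 = 1 → ¬(IsReflection g.1 ∧ IsReflection g.2.1)) :
    IsRotateOrReflect3 Γ := by
  have K110 := StatementAux.kill110 h₁ h₂ h₃ hsd h2inj hk₁ hk₂ hk₃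
  have K101 := StatementAux.kill101 h₁ h₂ h₃ hsd h2inj hk₁ hk₂ hk₃
  have K011 := StatementAux.kill011 h₁ h₂ h₃ hsd h2inj hk₁ hk₂ hk₃
  intro g hg
  cases hg1 : g.1 with
  | r a =>
    cases hg2 : g.2.1 with
    | r b =>
      cases hg3 : g.2.2 with
      | r c => exact Or.inl ⟨⟨a, rfl⟩, ⟨b, rfl⟩, ⟨c, rfl⟩⟩
      | sr c =>
        exfalso
        obtain ⟨h, hh, hh1⟩ := hsd.1 (DihedralGroup.sr 0)
        cases hy : h.2.1 with
        | r y =>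
          cases hz : h.2.2 with
          | r z =>
            exact K101 (g * h) (Γ.mul_mem hg hh)
              ⟨-a, by simp [Prod.fst_mul, hg1, hh1]⟩
              ⟨b + y, by simp [Prod.snd_mul, Prod.fst_mul, hg2, hy]⟩
              ⟨c + z, by simp [Prod.snd_mul, hg3, hz]⟩
          | sr z =>
            exact K101 h hh ⟨0, hh1⟩ ⟨y, hy⟩ ⟨z, hz⟩
        | sr y =>
          cases hz : h.2.2 with
          | r z =>
            exact K110 h hh ⟨0, hh1⟩ ⟨y, hy⟩ ⟨z, hz⟩
          | sr z =>
            exact K110 (g * h) (Γ.mul_mem hg hh)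
              ⟨-a, by simp [Prod.fst_mul, hg1, hh1]⟩
              ⟨y - b, by simp [Prod.snd_mul, Prod.fst_mul, hg2, hy]⟩
              ⟨z - c, by simp [Prod.snd_mul, hg3, hz]⟩
    | sr b =>
      cases hg3 : g.2.2 with
      | r c =>
        exfalso
        obtain ⟨h, hh, hh1⟩ := hsd.1 (DihedralGroup.sr 0)
        cases hy : h.2.1 with
        | r y =>
          cases hz : h.2.2 with
          | r z =>
            exact K110 (g * h) (Γ.mul_mem hg hh)
              ⟨-a, by simp [Prod.fst_mul, hg1, hh1]⟩
              ⟨b + y, by simp [Prod.snd_mul, Prod.fst_mul, hg2, hy]⟩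
              ⟨c + z, by simp [Prod.snd_mul, hg3, hz]⟩
          | sr z =>
            exact K101 h hh ⟨0, hh1⟩ ⟨y, hy⟩ ⟨z, hz⟩
        | sr y =>
          cases hz : h.2.2 with
          | r z =>
            exact K110 h hh ⟨0, hh1⟩ ⟨y, hy⟩ ⟨z, hz⟩
          | sr z =>
            exact K101 (g * h) (Γ.mul_mem hg hh)
              ⟨-a, by simp [Prod.fst_mul, hg1, hh1]⟩
              ⟨y - b, by simp [Prod.snd_mul, Prod.fst_mul, hg2, hy]⟩
              ⟨z - c, by simp [Prod.snd_mul, hg3, hz]⟩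
      | sr c =>
        exact (K011 g hg ⟨a, hg1⟩ ⟨b, hg2⟩ ⟨c, hg3⟩).elim
  | sr a =>
    cases hg2 : g.2.1 with
    | r b =>
      cases hg3 : g.2.2 with
      | r c =>
        exfalso
        obtain ⟨h, hh, hh2⟩ := hsd.2.1 (DihedralGroup.sr 0)
        cases hx : h.1 with
        | r x =>
          cases hz : h.2.2 with
          | r z =>
            exact K110 (g * h) (Γ.mul_mem hg hh)
              ⟨a + x, by simp [Prod.fst_mul, hg1, hx]⟩
              ⟨-b, by simp [Prod.snd_mul, Prod.fst_mul, hg2, hh2]⟩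
              ⟨c + z, by simp [Prod.snd_mul, hg3, hz]⟩
          | sr z =>
            exact K011 h hh ⟨x, hx⟩ ⟨0, hh2⟩ ⟨z, hz⟩
        | sr x =>
          cases hz : h.2.2 with
          | r z =>
            exact K110 h hh ⟨x, hx⟩ ⟨0, hh2⟩ ⟨z, hz⟩
          | sr z =>
            exact K011 (g * h) (Γ.mul_mem hg hh)
              ⟨x - a, by simp [Prod.fst_mul, hg1, hx]⟩
              ⟨-b, by simp [Prod.snd_mul, Prod.fst_mul, hg2, hh2]⟩
              ⟨z - c, by simp [Prod.snd_mul, hg3, hz]⟩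
      | sr c =>
        exact (K101 g hg ⟨a, hg1⟩ ⟨b, hg2⟩ ⟨c, hg3⟩).elim
    | sr b =>
      cases hg3 : g.2.2 with
      | r c =>
        exact (K110 g hg ⟨a, hg1⟩ ⟨b, hg2⟩ ⟨c, hg3⟩).elim
      | sr c =>
        exact Or.inr ⟨⟨a, rfl⟩, ⟨b, rfl⟩, ⟨c, rfl⟩⟩
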